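/- Let H = ℂ² with symplectic form ω_H and E = ℂ^{2n} with symplectic form ω_E, n ≥ 2. With γ₀ = (j_E e₁)⊗h and α₀ = e₁h ∧ e₂h ∧ Σᵢ eᵢh̃ ∧ ẽᵢh̃ − e₁h̃ ∧ e₂h̃ ∧ Σᵢ eᵢh ∧ ẽᵢh (where ẽᵢ = j_E eᵢ, h̃ = j_H h, and xh denotes x⊗h ∈ E⊗H), the interior contraction of α₀ with γ₀ (using the metric ω_E⊗ω_H) equals i_{γ₀}α₀ = Σᵢ eᵢh ∧ ẽᵢh ∧ e₂h̃ − 2 e₁h ∧ e₂h ∧ ẽ₁h̃. -/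
import Mathlib


open scoped BigOperators TensorProduct

/-- wedge of four vectors in the exterior algebra -/
noncomputable def wedge4 {T : Type*} [AddCommGroup T] [Module ℂ T] (x₁ x₂ x₃ x₄ : T) :
    ExteriorAlgebra ℂ T :=
  ExteriorAlgebra.ι ℂ x₁ * ExteriorAlgebra.ι ℂ x₂ * ExteriorAlgebra.ι ℂ x₃ *
    ExteriorAlgebra.ι ℂ x₄

/-- wedge of three vectors in the exterior algebra -/
noncomputable def wedge3 {T : Type*} [AddCommGroup T] [Module ℂ T] (x₁ x₂ x₃ : T) :
    ExteriorAlgebra ℂ T :=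
  ExteriorAlgebra.ι ℂ x₁ * ExteriorAlgebra.ι ℂ x₂ * ExteriorAlgebra.ι ℂ x₃

lemma wedge3_cyc {T : Type*} [AddCommGroup T] [Module ℂ T] (x y z : T) :
    wedge3 x y z = wedge3 z x y := by
  have swap : ∀ a b : T, ExteriorAlgebra.ι ℂ a * ExteriorAlgebra.ι ℂ b
      = -(ExteriorAlgebra.ι ℂ b * ExteriorAlgebra.ι ℂ a) := fun a b =>
    eq_neg_of_add_eq_zero_left (ExteriorAlgebra.ι_add_mul_swap a b)
  unfold wedge3
  rw [swap z x, neg_mul, mul_assoc, swap y z, mul_neg, ← mul_assoc]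

/-- with `γ₀ = ẽ₁h` and
`α₀ = e₁h∧e₂h∧Σᵢ eᵢh̃∧ẽᵢh̃ − e₁h̃∧e₂h̃∧Σᵢ eᵢh∧ẽᵢh`, the interior contraction of the
4-vector `α₀` with `γ₀` (with respect to the bilinear form `ω_E⊗ω_H` on `T = E⊗H`)
equals `Σᵢ eᵢh∧ẽᵢh∧e₂h̃ − 2 e₁h∧e₂h∧ẽ₁h̃`.  The unitary basis `{eᵢ}` of `E` is indexed
by `Fin n ⊕ Fin n`, with `ẽ`(first half) = second half and `ẽ`(second half) = −(first
half); `i_γ` is characterized on 4-vectors by `hic`. -/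
theorem statement_11
    (n : ℕ) (hn : 2 ≤ n)
    (E H : Type*) [AddCommGroup E] [Module ℂ E] [AddCommGroup H] [Module ℂ H]
    (ωE : E →ₗ[ℂ] E →ₗ[ℂ] ℂ) (hωEskew : ∀ u v : E, ωE u v = - ωE v u)
    (ωH : H →ₗ[ℂ] H →ₗ[ℂ] ℂ) (hωHskew : ∀ u v : H, ωH u v = - ωH v u)
    (e te : Fin n ⊕ Fin n → E)
    (hte1 : ∀ i : Fin n, te (Sum.inl i) = e (Sum.inr i))
    (hte2 : ∀ i : Fin n, te (Sum.inr i) = - e (Sum.inl i))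
    (hunit : ∀ i j : Fin n ⊕ Fin n, ωE (e i) (te j) = if i = j then 1 else 0)
    (h th : H) (hH1 : ωH h th = 1) (hH2 : ωH h h = 0) (hH3 : ωH th th = 0)
    -- the complex bilinear metric ω_E ⊗ ω_H on T = E⊗H
    (B : E ⊗[ℂ] H →ₗ[ℂ] E ⊗[ℂ] H →ₗ[ℂ] ℂ)
    (hB : ∀ (a b : E) (c d : H), B (a ⊗ₜ c) (b ⊗ₜ d) = ωE a b * ωH c d)
    -- interior contraction of a 4-vector with a vector
    (ic : E ⊗[ℂ] H →ₗ[ℂ]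
      ExteriorAlgebra ℂ (E ⊗[ℂ] H) →ₗ[ℂ] ExteriorAlgebra ℂ (E ⊗[ℂ] H))
    (hic : ∀ γ x₁ x₂ x₃ x₄ : E ⊗[ℂ] H,
      ic γ (wedge4 x₁ x₂ x₃ x₄)
        = B γ x₁ • wedge3 x₂ x₃ x₄ - B γ x₂ • wedge3 x₁ x₃ x₄
          + B γ x₃ • wedge3 x₁ x₂ x₄ - B γ x₄ • wedge3 x₁ x₂ x₃) :
    ic (te (Sum.inl ⟨0, by omega⟩) ⊗ₜ h)
      ((∑ i : Fin n ⊕ Fin n,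
          wedge4 (e (Sum.inl ⟨0, by omega⟩) ⊗ₜ h) (e (Sum.inl ⟨1, by omega⟩) ⊗ₜ h)
            (e i ⊗ₜ th) (te i ⊗ₜ th))
       - ∑ i : Fin n ⊕ Fin n,
          wedge4 (e (Sum.inl ⟨0, by omega⟩) ⊗ₜ th) (e (Sum.inl ⟨1, by omega⟩) ⊗ₜ th)
            (e i ⊗ₜ h) (te i ⊗ₜ h))
    = (∑ i : Fin n ⊕ Fin n,
        wedge3 (e i ⊗ₜ h) (te i ⊗ₜ h) (e (Sum.inl ⟨1, by omega⟩) ⊗ₜ th))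
      - (2 : ℂ) • wedge3 (e (Sum.inl ⟨0, by omega⟩) ⊗ₜ h)
          (e (Sum.inl ⟨1, by omega⟩) ⊗ₜ h) (te (Sum.inl ⟨0, by omega⟩) ⊗ₜ th) := by
  set i0 : Fin n ⊕ Fin n := Sum.inl ⟨0, by omega⟩ with hi0
  set i1 : Fin n ⊕ Fin n := Sum.inl ⟨1, by omega⟩ with hi1
  set j0 : Fin n ⊕ Fin n := Sum.inr ⟨0, by omega⟩ with hj0
  have hγh : ∀ x : E, B (te i0 ⊗ₜ h) (x ⊗ₜ h) = 0 := fun x => by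
    rw [hB, hH2, mul_zero]
  have hγe : ∀ i, B (te i0 ⊗ₜ h) (e i ⊗ₜ[ℂ] th)
      = if i = i0 then (-1 : ℂ) else 0 := fun i => by
    rw [hB, hH1, mul_one, hωEskew, hunit]
    split <;> simp
  have hγte : ∀ i, B (te i0 ⊗ₜ h) (te i ⊗ₜ[ℂ] th)
      = if i = j0 then (1 : ℂ) else 0 := fun i => by
    rw [hB, hH1, mul_one, show te i0 = e j0 from hte1 _, hunit]
    simp [eq_comm]
  rw [map_sub, map_sum, map_sum]
  have hS1 : ∀ i, ic (te i0 ⊗ₜ h)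
        (wedge4 (e i0 ⊗ₜ h) (e i1 ⊗ₜ h) (e i ⊗ₜ th) (te i ⊗ₜ th))
      = (if i = i0 then (-1 : ℂ) else 0) • wedge3 (e i0 ⊗ₜ h) (e i1 ⊗ₜ h) (te i ⊗ₜ th)
        - (if i = j0 then (1 : ℂ) else 0) • wedge3 (e i0 ⊗ₜ h) (e i1 ⊗ₜ h) (e i ⊗ₜ th) :=
    fun i => by
      rw [hic, hγh, hγh, hγe, hγte, zero_smul, zero_smul, zero_sub, neg_zero, zero_add]
  have hS2 : ∀ i, ic (te i0 ⊗ₜ h)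
        (wedge4 (e i0 ⊗ₜ th) (e i1 ⊗ₜ th) (e i ⊗ₜ h) (te i ⊗ₜ h))
      = -wedge3 (e i1 ⊗ₜ th) (e i ⊗ₜ h) (te i ⊗ₜ h) := fun i => by
    rw [hic, hγh, hγh, hγe, hγe]
    simp [hi0, hi1]
  simp only [hS1, hS2]
  rw [Finset.sum_sub_distrib, Finset.sum_neg_distrib]
  simp only [ite_smul, zero_smul, Finset.sum_ite_eq', Finset.mem_univ, if_true]
  rw [show e j0 = te i0 from (hte1 _).symm]
  have hcyc : ∀ i, wedge3 (e i ⊗ₜ[ℂ] h) (te i ⊗ₜ[ℂ] h) (e i1 ⊗ₜ[ℂ] th)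
      = wedge3 (e i1 ⊗ₜ[ℂ] th) (e i ⊗ₜ[ℂ] h) (te i ⊗ₜ[ℂ] h) := fun i => wedge3_cyc _ _ _
  rw [Finset.sum_congr rfl fun i _ => hcyc i]


  module
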